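/- In the resource competition game with parameter r = 1, the LB (Stackelberg) equilibrium coincides with the BB (Nash) equilibrium: the maximizer over x₁ > 0 of x₁ ↦ u₁(x₁, f₂ᴮ(x₁)) is x₁ = 1/4, and f₂ᴮ(1/4) = 1/4, so that (x₁ᴸᴮ, x₂ᴸᴮ) = (1/4, 1/4) = (x₁ᴮᴮ, x₂ᴮᴮ); similarly the maximizer over x₂ > 0 of x₂ ↦ u₂(f₁ᴮ(x₂), x₂) is x₂ = 1/4 and f₁ᴮ(1/4) = 1/4, so the BL equilibrium also equals (1/4, 1/4). -/

import Mathlib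

/-- Player 1's payoff in the resource competition game. -/
noncomputable def rcU1 (r x₁ x₂ : ℝ) : ℝ := r * x₁ / (r * x₁ + x₂) - x₁

/-- Player 2's payoff in the resource competition game. -/
noncomputable def rcU2 (r x₁ x₂ : ℝ) : ℝ := x₂ / (r * x₁ + x₂) - x₂

/-- Player 1's B-response in the resource competition game. -/
noncomputable def rcF1B (r x₂ : ℝ) : ℝ := max (Real.sqrt (x₂ / r) - x₂ / r) 0

/-- Player 2's B-response in the resource competition game. -/
noncomputable def rcF2B (r x₁ : ℝ) : ℝ := max (Real.sqrt (r * x₁) - r * x₁) 0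

lemma rc_sqrt_quarter : Real.sqrt (1/4 : ℝ) = 1/2 := by
  rw [show (1/4:ℝ) = (1/2)^2 by norm_num, Real.sqrt_sq (by norm_num)]

lemma rc_key1 (x : ℝ) (hx : 0 < x) :
    rcU1 1 x (rcF2B 1 x) ≤ 1/4 ∧ (rcU1 1 x (rcF2B 1 x) = 1/4 → x = 1/4) := by
  have hs0 : 0 < Real.sqrt x := Real.sqrt_pos.mpr hx
  set s := Real.sqrt x with hsdef
  have hs2 : s * s = x := Real.mul_self_sqrt hx.le
  have hF : rcF2B 1 x = max (s - x) 0 := by simp [rcF2B, hsdef]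
  by_cases h : x ≤ s
  · have hmax : max (s - x) 0 = s - x := max_eq_left (by linarith)
    have hu : rcU1 1 x (rcF2B 1 x) = s - x := by
      rw [rcU1, hF, hmax, one_mul, show x + (s - x) = s by ring]
      rw [show x / s = s by rw [div_eq_iff hs0.ne']; linarith]
    rw [hu]
    constructor
    · nlinarith [sq_nonneg (s - 1/2)]
    · intro he; nlinarith [sq_nonneg (s - 1/2)]
  · have hmax : max (s - x) 0 = 0 := max_eq_right (by linarith)
    have hu : rcU1 1 x (rcF2B 1 x) = 1 - x := by
      rw [rcU1, hF, hmax, one_mul, add_zero, div_self hx.ne']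
    have hx1 : 1 < x := by nlinarith
    rw [hu]
    constructor
    · linarith
    · intro he; linarith

lemma rc_key2 (y : ℝ) (hy : 0 < y) :
    rcU2 1 (rcF1B 1 y) y ≤ 1/4 ∧ (rcU2 1 (rcF1B 1 y) y = 1/4 → y = 1/4) := by
  have hs0 : 0 < Real.sqrt y := Real.sqrt_pos.mpr hy
  set s := Real.sqrt y with hsdef
  have hs2 : s * s = y := Real.mul_self_sqrt hy.le
  have hF : rcF1B 1 y = max (s - y) 0 := by simp [rcF1B, hsdef]
  by_cases h : y ≤ s
  · have hmax : max (s - y) 0 = s - y := max_eq_left (by linarith)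
    have hu : rcU2 1 (rcF1B 1 y) y = s - y := by
      rw [rcU2, hF, hmax, one_mul, show s - y + y = s by ring]
      rw [show y / s = s by rw [div_eq_iff hs0.ne']; linarith]
    rw [hu]
    constructor
    · nlinarith [sq_nonneg (s - 1/2)]
    · intro he; nlinarith [sq_nonneg (s - 1/2)]
  · have hmax : max (s - y) 0 = 0 := max_eq_right (by linarith)
    have hu : rcU2 1 (rcF1B 1 y) y = 1 - y := by
      rw [rcU2, hF, hmax, one_mul, zero_add, div_self hy.ne']
    have hy1 : 1 < y := by nlinarith
    rw [hu]
    constructor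
    · linarith
    · intro he; linarith

lemma rc_f2b_quarter : rcF2B 1 (1/4 : ℝ) = 1/4 := by
  rw [rcF2B, show (1:ℝ)*(1/4) = 1/4 by norm_num, rc_sqrt_quarter]
  norm_num

lemma rc_f1b_quarter : rcF1B 1 (1/4 : ℝ) = 1/4 := by
  rw [rcF1B, show (1/4:ℝ)/1 = 1/4 by norm_num, rc_sqrt_quarter]
  norm_num

lemma rc_u1_quarter : rcU1 1 (1/4) (rcF2B 1 (1/4)) = 1/4 := by
  rw [rc_f2b_quarter, rcU1]; norm_num

lemma rc_u2_quarter : rcU2 1 (rcF1B 1 (1/4)) (1/4) = 1/4 := by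
  rw [rc_f1b_quarter, rcU2]; norm_num

/-- In the resource competition game with `r = 1`, the LB and BL
(Stackelberg) equilibria coincide with the BB (Nash) equilibrium `(1/4, 1/4)`:
the unique maximizer over `x₁ > 0` of `x₁ ↦ u₁(x₁, f₂ᴮ(x₁))` is `1/4` with
`f₂ᴮ(1/4) = 1/4`, and similarly for player 2. -/
theorem rc_r_eq_one_stackelberg_eq_nash :
    (∀ x₁ : ℝ, 0 < x₁ →
      rcU1 1 x₁ (rcF2B 1 x₁) ≤ rcU1 1 (1 / 4) (rcF2B 1 (1 / 4))) ∧
    (∀ x₁ : ℝ, 0 < x₁ →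
      (∀ y : ℝ, 0 < y → rcU1 1 y (rcF2B 1 y) ≤ rcU1 1 x₁ (rcF2B 1 x₁)) →
      x₁ = 1 / 4) ∧
    rcF2B 1 (1 / 4) = 1 / 4 ∧
    (∀ x₂ : ℝ, 0 < x₂ →
      rcU2 1 (rcF1B 1 x₂) x₂ ≤ rcU2 1 (rcF1B 1 (1 / 4)) (1 / 4)) ∧
    (∀ x₂ : ℝ, 0 < x₂ →
      (∀ y : ℝ, 0 < y → rcU2 1 (rcF1B 1 y) y ≤ rcU2 1 (rcF1B 1 x₂) x₂) →
      x₂ = 1 / 4) ∧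
    rcF1B 1 (1 / 4) = 1 / 4 := by
  refine ⟨?_, ?_, rc_f2b_quarter, ?_, ?_, rc_f1b_quarter⟩
  · intro x hx
    rw [rc_u1_quarter]
    exact (rc_key1 x hx).1
  · intro x hx hmax
    have h1 := hmax (1/4) (by norm_num)
    rw [rc_u1_quarter] at h1
    exact (rc_key1 x hx).2 (le_antisymm (rc_key1 x hx).1 h1)
  · intro y hy
    rw [rc_u2_quarter]
    exact (rc_key2 y hy).1
  · intro y hy hmax
    have h1 := hmax (1/4) (by norm_num)
    rw [rc_u2_quarter] at h1
    exact (rc_key2 y hy).2 (le_antisymm (rc_key2 y hy).1 h1)
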